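/- Let f(t,x) = x³ + a₂(t)x² + a₃(t)x + a₄(t) ∈ ℂ[t,x] with deg a₂ = 2, deg a₃ = 3, and deg a₄ ≤ 3. Let x₀, y₀ ∈ ℂ[t] satisfy y₀² = f(t, x₀). For r ∈ ℂ(t)^× and s ∈ ℂ(t), set v = r(x − x₀)(x − s) − y₀, and suppose v² − f = r²(x − x₀)·u where u = x³ + c₁(t)x² + c₂(t)x + c₃(t) with c_i ∈ ℂ(t). If u is a polynomial in ℂ[t,x] of total degree 3, then r ∈ ℂ^× and s ∈ ℂ[t] with deg s ≤ 1. -/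

import Mathlib

open Polynomial

noncomputable section

lemma chase3 (W P x0 M d1 d2 d3 b2 b3 b4 : Polynomial ℂ)
    (hW : W ≠ 0)
    (hd1 : d1.natDegree ≤ 1) (hd2 : d2.natDegree ≤ 2) (hd3 : d3.natDegree ≤ 3)
    (hb2 : b2.natDegree = 2) (hb3 : b3.natDegree = 3) (hb4 : b4.natDegree ≤ 3)
    (hx0 : x0 = 2*P + W + d1)
    (hM : M + P^2 = W*b2 + d2 - x0*d1)
    (h3 : P*M = x0*d2 - d3 - W*b3)
    (h4 : M^2 = 4*(W*b4 - x0*d3)) :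
    W.natDegree = 0 ∧ P.natDegree ≤ 1 := by
  have hb2ne : b2 ≠ 0 := fun h => by simp [h] at hb2
  have hb3ne : b3 ≠ 0 := fun h => by simp [h] at hb3
  set n := W.natDegree with hn
  set q := P.natDegree with hq
  have hx0d : x0.natDegree ≤ max q (max n 1) := by
    rw [hx0]
    refine le_trans (natDegree_add_le _ _) ?_
    have h1 : (2*P + W).natDegree ≤ max q n := by
      refine le_trans (natDegree_add_le _ _) ?_
      have : (2*P).natDegree ≤ q := le_trans (natDegree_mul_le) (by simp [hq])
      omega
    omega
  have hM2le : 2 * M.natDegree ≤ max (n+3) (x0.natDegree+3) := by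
    have e1 : (M^2).natDegree = 2 * M.natDegree := natDegree_pow M 2
    have e2 : (4*(W*b4 - x0*d3)).natDegree ≤ max (n+3) (x0.natDegree+3) := by
      refine le_trans natDegree_mul_le ?_
      have e3 : (W*b4 - x0*d3).natDegree ≤ max (n+3) (x0.natDegree+3) := by
        refine le_trans (natDegree_sub_le _ _) ?_
        have : (W*b4).natDegree ≤ n + 3 := le_trans natDegree_mul_le (by omega)
        have : (x0*d3).natDegree ≤ x0.natDegree + 3 := le_trans natDegree_mul_le (by omega)
        omega
      simpa using e3
    rw [← e1, h4]
    exact e2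
  have k1 : ¬ (2 ≤ q ∧ n < q) := by
    rintro ⟨hq2, hnq⟩
    have hPne : P ≠ 0 := fun h => by rw [hq, h, natDegree_zero] at hq2; omega
    have hx0q : x0.natDegree ≤ q := le_trans hx0d (by omega)
    have hRHS : (W*b2 + d2 - x0*d1).natDegree ≤ q + 1 := by
      refine le_trans (natDegree_sub_le _ _) ?_
      have e1 : (W*b2).natDegree ≤ n + 2 := le_trans natDegree_mul_le (by omega)
      have e2 : (W*b2 + d2).natDegree ≤ max (n+2) 2 := le_trans (natDegree_add_le _ _) (by omega)
      have e3 : (x0*d1).natDegree ≤ q + 1 := le_trans natDegree_mul_le (by omega)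
      omega
    have hP2 : (P^2).natDegree = 2*q := natDegree_pow P 2
    have hMdeg : M.natDegree = 2*q := by
      have e : M = (W*b2 + d2 - x0*d1) - P^2 := by linear_combination hM
      rw [e, natDegree_sub_eq_right_of_natDegree_lt (by omega), hP2]
    omega
  have k2 : ¬ (2 ≤ n ∧ q < n) := by
    rintro ⟨hn2, hqn⟩
    have hx0n : x0.natDegree ≤ n := le_trans hx0d (by omega)
    have hWb3 : (W*b3).natDegree = n + 3 := by rw [natDegree_mul hW hb3ne, hb3]
    have hsub : (x0*d2 - d3).natDegree ≤ n + 2 := by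
      refine le_trans (natDegree_sub_le _ _) ?_
      have : (x0*d2).natDegree ≤ n + 2 := le_trans natDegree_mul_le (by omega)
      omega
    have hR3 : (x0*d2 - d3 - W*b3).natDegree = n + 3 := by
      rw [natDegree_sub_eq_right_of_natDegree_lt (by omega), hWb3]
    have hPM : (P*M).natDegree = n + 3 := by rw [h3, hR3]
    have hPMne : P*M ≠ 0 := fun h => by rw [h, natDegree_zero] at hPM; omega
    obtain ⟨hPne, hMne⟩ := mul_ne_zero_iff.mp hPMne
    have hmul : q + M.natDegree = n + 3 := by rw [← natDegree_mul hPne hMne, hPM]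
    have hM2 : 2 * M.natDegree ≤ n + 3 := le_trans hM2le (by omega)
    have hP2 : (P^2).natDegree = 2*q := natDegree_pow P 2
    have hLHS : (M + P^2).natDegree = 2*q := by
      rw [natDegree_add_eq_right_of_natDegree_lt (by omega), hP2]
    have hRHS : (W*b2 + d2 - x0*d1).natDegree ≤ n + 2 := by
      refine le_trans (natDegree_sub_le _ _) ?_
      have e1 : (W*b2).natDegree ≤ n + 2 := le_trans natDegree_mul_le (by omega)
      have e2 : (W*b2 + d2).natDegree ≤ max (n+2) 2 := le_trans (natDegree_add_le _ _) (by omega)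
      have e3 : (x0*d1).natDegree ≤ n + 1 := le_trans natDegree_mul_le (by omega)
      omega
    rw [hM] at hLHS
    omega
  have k3 : ¬ (n = 1 ∧ q = 0) := by
    rintro ⟨hn1, hq0⟩
    have hx01 : x0.natDegree ≤ 1 := le_trans hx0d (by omega)
    have hWb2 : (W*b2).natDegree = 3 := by rw [natDegree_mul hW hb2ne, hb2, ← hn, hn1]
    have hsub : (d2 - x0*d1).natDegree ≤ 2 := by
      refine le_trans (natDegree_sub_le _ _) ?_
      have : (x0*d1).natDegree ≤ 2 := le_trans natDegree_mul_le (by omega)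
      omega
    have hR : (W*b2 + (d2 - x0*d1)).natDegree = 3 := by
      rw [natDegree_add_eq_left_of_natDegree_lt (by omega), hWb2]
    have hP2 : (P^2).natDegree = 0 := by rw [natDegree_pow, ← hq, hq0]
    have hMdeg : M.natDegree = 3 := by
      have e : M = (W*b2 + (d2 - x0*d1)) - P^2 := by linear_combination hM
      rw [e, natDegree_sub_eq_left_of_natDegree_lt (by omega), hR]
    omega
  have k4 : ¬ (q = n ∧ 1 ≤ n) := by
    rintro ⟨hqn, hn1⟩
    have hx0n : x0.natDegree ≤ n := le_trans hx0d (by omega)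
    have hWb3 : (W*b3).natDegree = n + 3 := by rw [natDegree_mul hW hb3ne, hb3]
    have hsub : (x0*d2 - d3).natDegree ≤ n + 2 := by
      refine le_trans (natDegree_sub_le _ _) ?_
      have : (x0*d2).natDegree ≤ n + 2 := le_trans natDegree_mul_le (by omega)
      omega
    have hR3 : (x0*d2 - d3 - W*b3).natDegree = n + 3 := by
      rw [natDegree_sub_eq_right_of_natDegree_lt (by omega), hWb3]
    have hPM : (P*M).natDegree = n + 3 := by rw [h3, hR3]
    have hPMne : P*M ≠ 0 := fun h => by rw [h, natDegree_zero] at hPM; omega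
    obtain ⟨hPne, hMne⟩ := mul_ne_zero_iff.mp hPMne
    have hmul : q + M.natDegree = n + 3 := by rw [← natDegree_mul hPne hMne, hPM]
    have hM2 : 2 * M.natDegree ≤ n + 3 := le_trans hM2le (by omega)
    have hP2 : (P^2).natDegree = 2*q := natDegree_pow P 2
    have hLHS : (M + P^2).natDegree = 2*q := by
      rw [natDegree_add_eq_right_of_natDegree_lt (by omega), hP2]
    have hRHS : (W*b2 + d2 - x0*d1).natDegree ≤ n + 2 := by
      refine le_trans (natDegree_sub_le _ _) ?_
      have e1 : (W*b2).natDegree ≤ n + 2 := le_trans natDegree_mul_le (by omega)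
      have e2 : (W*b2 + d2).natDegree ≤ max (n+2) 2 := le_trans (natDegree_add_le _ _) (by omega)
      have e3 : (x0*d1).natDegree ≤ n + 1 := le_trans natDegree_mul_le (by omega)
      omega
    rw [hM] at hLHS
    omega
  constructor
  · by_contra hne
    have hn1 : 1 ≤ n := by omega
    rcases lt_trichotomy q n with h | h | h
    · rcases Nat.lt_or_ge n 2 with h2' | h2'
      · exact k3 ⟨by omega, by omega⟩
      · exact k2 ⟨h2', h⟩
    · exact k4 ⟨h, hn1⟩
    · exact k1 ⟨by omega, h⟩
  · by_contra hne
    have hn0 : n = 0 := by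
      by_contra hne2
      have hn1 : 1 ≤ n := by omega
      rcases lt_trichotomy q n with h | h | h
      · rcases Nat.lt_or_ge n 2 with h2' | h2'
        · exact k3 ⟨by omega, by omega⟩
        · exact k2 ⟨h2', h⟩
      · exact k4 ⟨h, hn1⟩
      · exact k1 ⟨by omega, h⟩
    exact k1 ⟨by omega, by omega⟩

theorem stmt3 (a2 a3 a4 : Polynomial ℂ)
    (h2 : a2.natDegree = 2) (h3 : a3.natDegree = 3) (h4 : a4.natDegree ≤ 3)
    (x0 y0 : Polynomial ℂ)
    (f : Polynomial (Polynomial ℂ))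
    (hf : f = X ^ 3 + C a2 * X ^ 2 + C a3 * X + C a4)
    (hxy : y0 ^ 2 = f.eval x0)
    (r s : RatFunc ℂ) (hr : r ≠ 0)
    (v : Polynomial (RatFunc ℂ))
    (hv : v = C r * (X - C (algebraMap (Polynomial ℂ) (RatFunc ℂ) x0)) *
        (X - C s) - C (algebraMap (Polynomial ℂ) (RatFunc ℂ) y0))
    (c1 c2 c3 : RatFunc ℂ)
    (u : Polynomial (RatFunc ℂ))
    (hu : u = X ^ 3 + C c1 * X ^ 2 + C c2 * X + C c3)
    (heq : v ^ 2 - f.map (algebraMap (Polynomial ℂ) (RatFunc ℂ)) =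
        C r ^ 2 * (X - C (algebraMap (Polynomial ℂ) (RatFunc ℂ) x0)) * u)
    (hupoly : ∃ d1 d2 d3 : Polynomial ℂ,
        c1 = algebraMap (Polynomial ℂ) (RatFunc ℂ) d1 ∧
        c2 = algebraMap (Polynomial ℂ) (RatFunc ℂ) d2 ∧
        c3 = algebraMap (Polynomial ℂ) (RatFunc ℂ) d3 ∧
        d1.natDegree ≤ 1 ∧ d2.natDegree ≤ 2 ∧ d3.natDegree ≤ 3) :
    (∃ r0 : ℂ, r0 ≠ 0 ∧ r = algebraMap ℂ (RatFunc ℂ) r0) ∧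
      ∃ s' : Polynomial ℂ, s'.natDegree ≤ 1 ∧
        s = algebraMap (Polynomial ℂ) (RatFunc ℂ) s' := by
  haveI : CharZero (RatFunc ℂ) :=
    charZero_of_injective_algebraMap (algebraMap ℂ (RatFunc ℂ)).injective
  obtain ⟨d1, d2, d3, hc1, hc2, hc3, hd1, hd2, hd3⟩ := hupoly
  set A := algebraMap (Polynomial ℂ) (RatFunc ℂ) with hA
  have hinj : Function.Injective A := IsFractionRing.injective _ _
  set α : RatFunc ℂ := A x0 with hα
  set β : RatFunc ℂ := A y0 with hβ
  set σ2 : RatFunc ℂ := A a2 with hσ2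
  set σ3 : RatFunc ℂ := A a3 with hσ3
  set σ4 : RatFunc ℂ := A a4 with hσ4
  set w : RatFunc ℂ := r⁻¹ * r⁻¹ with hwdef
  set z : RatFunc ℂ := β * r⁻¹ with hzdef
  set p : RatFunc ℂ := α + s with hpdef
  set e : RatFunc ℂ := α * s - z with hedef
  have hrr : r * r⁻¹ = 1 := mul_inv_cancel₀ hr
  have hw1 : r^2 * w = 1 := by rw [hwdef, pow_two]; field_simp
  have hfm : f.map A = X^3 + C σ2 * X^2 + C σ3 * X + C σ4 := by
    rw [hf]; simp; rfl
  have hCr : (C r : Polynomial (RatFunc ℂ)) * C r⁻¹ = 1 := by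
    rw [← C_mul, hrr, C_1]
  have hvfac : C r * (X^2 - C p * X + C e) = v := by
    rw [hv, hpdef, hedef, hzdef]
    simp only [map_add, map_sub, map_mul]
    linear_combination (-(C β : Polynomial (RatFunc ℂ))) * hCr
  have hCrw : (C r : Polynomial (RatFunc ℂ))^2 * C w = 1 := by
    rw [← C_pow, ← C_mul, hw1, C_1]
  have hCr2 : (C r : Polynomial (RatFunc ℂ))^2 ≠ 0 :=
    pow_ne_zero _ (fun h => hr (by simpa using congrArg (eval 0) h))
  have key : (X^2 - C p * X + C e)^2 =
      C w * (X^3 + C σ2 * X^2 + C σ3 * X + C σ4) +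
        (X - C α) * (X^3 + C c1 * X^2 + C c2 * X + C c3) := by
    apply mul_left_cancel₀ hCr2
    calc (C r)^2 * (X^2 - C p * X + C e)^2
        = (C r * (X^2 - C p * X + C e))^2 := by ring
      _ = v^2 := by rw [hvfac]
      _ = (v^2 - f.map A) + f.map A := by ring
      _ = C r ^ 2 * ((X - C α) * u) + (X^3 + C σ2 * X^2 + C σ3 * X + C σ4) := by
          rw [← mul_assoc, ← heq, hfm]
      _ = (C r)^2 * (C w * (X^3 + C σ2 * X^2 + C σ3 * X + C σ4) +
            (X - C α) * (X^3 + C c1 * X^2 + C c2 * X + C c3)) := by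
          rw [hu]
          linear_combination (-(X^3 + C σ2 * X^2 + C σ3 * X + C σ4) :
            Polynomial (RatFunc ℂ)) * hCrw
  have hkev : ∀ ξ : RatFunc ℂ, (ξ^2 - p*ξ + e)^2 =
      w*(ξ^3 + σ2*ξ^2 + σ3*ξ + σ4) + (ξ - α)*(ξ^3 + c1*ξ^2 + c2*ξ + c3) := by
    intro ξ
    have h := congrArg (eval ξ) key
    simp only [eval_add, eval_sub, eval_mul, eval_pow, eval_C, eval_X] at h
    linear_combination h
  have E1 : w = α - c1 - 2*p := by
    linear_combination (-1/2 : RatFunc ℂ) * hkev 0 + (1/2 : RatFunc ℂ) * hkev 1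
      + (1/6 : RatFunc ℂ) * hkev (-1) + (-1/6 : RatFunc ℂ) * hkev 2
  have E2 : p^2 + 2*e = w*σ2 + c2 - α*c1 := by
    linear_combination (-1 : RatFunc ℂ) * hkev 0 + (1/2 : RatFunc ℂ) * hkev 1
      + (1/2 : RatFunc ℂ) * hkev (-1)
  have E3 : 2*(p*e) = α*c2 - c3 - w*σ3 := by
    linear_combination (1/2 : RatFunc ℂ) * hkev 0 + (-1 : RatFunc ℂ) * hkev 1
      + (1/3 : RatFunc ℂ) * hkev (-1) + (1/6 : RatFunc ℂ) * hkev 2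
  have E4 : e^2 = w*σ4 - α*c3 := by linear_combination hkev 0
  have hT : p^3 + 2*σ2*p^2 + (2*σ3 - (α - c1)*σ2 - c2 + α*c1)*p
      + (α*c2 - c3 - (α - c1)*σ3) = 0 := by
    linear_combination p*E2 - E3 + (p*σ2 + σ3)*E1
  -- integrality of p
  have hint : IsIntegral (Polynomial ℂ) p := by
    refine ⟨X^3 + C (2*a2) * X^2 + C (2*a3 - (x0 - d1)*a2 - d2 + x0*d1) * X
      + C (x0*d2 - d3 - (x0 - d1)*a3), by monicity!, ?_⟩
    simp only [eval₂_add, eval₂_mul, eval₂_pow, eval₂_X, eval₂_C]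
    rw [← hA]
    simp only [map_add, map_sub, map_mul, map_ofNat]
    rw [← hσ2, ← hσ3, ← hα, ← hc1, ← hc2, ← hc3]
    linear_combination hT
  obtain ⟨P, hP⟩ := IsIntegrallyClosed.isIntegral_iff.mp hint
  rw [← hA] at hP
  set Wp := x0 - d1 - 2*P with hWpdef
  have hAW : A Wp = w := by
    rw [hWpdef]
    simp only [map_sub, map_mul, map_ofNat]
    rw [← hα, ← hc1, hP]
    linear_combination -E1
  set Mp := Wp*a2 + d2 - x0*d1 - P^2 with hMpdef
  have hAM : A Mp = 2*e := by
    rw [hMpdef]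
    simp only [map_sub, map_add, map_mul, map_pow]
    rw [← hα, ← hc1, ← hc2, ← hσ2, hP, hAW]
    linear_combination -E2
  have hWne : Wp ≠ 0 := by
    intro h0
    have hw0 : w = 0 := by rw [← hAW, h0, map_zero]
    rw [hwdef] at hw0
    exact hr (inv_eq_zero.mp (mul_self_eq_zero.mp hw0))
  have P1 : x0 = 2*P + Wp + d1 := by rw [hWpdef]; ring
  have P2 : Mp + P^2 = Wp*a2 + d2 - x0*d1 := by rw [hMpdef]; ring
  have P3 : P*Mp = x0*d2 - d3 - Wp*a3 := by
    apply hinj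
    simp only [map_mul, map_sub]
    rw [hP, hAM, hAW, ← hα, ← hc2, ← hc3, ← hσ3]
    linear_combination E3
  have P4 : Mp^2 = 4*(Wp*a4 - x0*d3) := by
    apply hinj
    simp only [map_mul, map_sub, map_pow, map_ofNat]
    rw [hAM, hAW, ← hα, ← hc3, ← hσ4]
    linear_combination 4*E4
  obtain ⟨hWdeg, hPdeg⟩ :=
    chase3 Wp P x0 Mp d1 d2 d3 a2 a3 a4 hWne hd1 hd2 hd3 h2 h3 h4 P1 P2 P3 P4
  constructor
  · obtain ⟨w0, hw0⟩ := natDegree_eq_zero.mp hWdeg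
    have hw0ne : w0 ≠ 0 := fun h => hWne (by rw [← hw0, h, map_zero])
    have htow : ∀ c : ℂ, algebraMap ℂ (RatFunc ℂ) c = A (C c) := by
      intro c
      rw [hA, IsScalarTower.algebraMap_apply ℂ (Polynomial ℂ) (RatFunc ℂ),
        Polynomial.algebraMap_eq]
    have hAw0 : algebraMap ℂ (RatFunc ℂ) w0 = w := by
      rw [htow w0, hw0, hAW]
    have hwne' : w ≠ 0 := by
      intro h0
      rw [h0, mul_zero] at hw1
      exact one_ne_zero hw1.symm
    obtain ⟨ρ, hρ⟩ := IsAlgClosed.exists_pow_nat_eq (k := ℂ) w0⁻¹ (n := 2) (by norm_num)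
    have hrsq : r^2 = (algebraMap ℂ (RatFunc ℂ) ρ)^2 := by
      have h1 : (algebraMap ℂ (RatFunc ℂ) ρ)^2 * algebraMap ℂ (RatFunc ℂ) w0 = 1 := by
        rw [← map_pow, hρ, ← map_mul, inv_mul_cancel₀ hw0ne, map_one]
      rw [hAw0] at h1
      exact mul_right_cancel₀ hwne' (hw1.trans h1.symm)
    have hfact : (r - algebraMap ℂ (RatFunc ℂ) ρ) * (r + algebraMap ℂ (RatFunc ℂ) ρ) = 0 := by
      linear_combination hrsq
    have hρne : ρ ≠ 0 := by
      intro h0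
      rw [h0] at hρ
      have : w0⁻¹ = 0 := by rw [← hρ]; norm_num
      exact hw0ne (inv_eq_zero.mp this)
    rcases mul_eq_zero.mp hfact with h | h
    · exact ⟨ρ, hρne, by linear_combination h⟩
    · exact ⟨-ρ, neg_ne_zero.mpr hρne, by rw [map_neg]; linear_combination h⟩
  · refine ⟨P - x0, ?_, ?_⟩
    · have hrw : P - x0 = -(P + Wp + d1) := by rw [P1]; ring
      rw [hrw, natDegree_neg]
      refine le_trans (natDegree_add_le _ _) ?_
      have := natDegree_add_le P Wp
      omega
    · rw [map_sub, hP, ← hα]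
      rw [hpdef]
      ring
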